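/- Let k be a field and A a bialgebra over k endowed with an algebra grading A = ⊕_{m∈ℕ} A^m by k-subspaces (so the sum is direct, 1 ∈ A^0, and A^m · A^{m'} ⊆ A^{m+m'} for all m, m'), such that A^0 is one-dimensional, spanned by 1. Suppose n ≥ 1 and there exist elements t_{ij} ∈ A^1 (1 ≤ i, j ≤ n) with Δ(t_{ij}) = Σ_{k=1}^n t_{ik} ⊗ t_{kj} and ε(t_{ij}) = δ_{ij}. Then A admits no antipode: there is no k-linear map S : A → A satisfying Σ a_(1) S(a_(2)) = ε(a) 1 for all a ∈ A. In particular, A is not a Hopf algebra. -/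

import Mathlib

open scoped TensorProduct

/-- **A graded bialgebra with comatrix generators in degree 1 admits no antipode.**
Let `A` be a bialgebra over a field `k` with an algebra grading `A = ⊕ₘ A^m` such
that `A^0 = k·1`, and suppose there are comatrix elements `t i j ∈ A^1`
(`n ≥ 1`).  Then there is no `k`-linear map `S : A → A` with
`∑ a₍₁₎ S(a₍₂₎) = ε(a) 1` for all `a`; in particular `A` is not a Hopf algebra. -/
theorem no_antipode_of_graded_comatrix
    {k : Type*} [Field k] {A : Type*} [Ring A] [Bialgebra k A]
    (𝒜 : ℕ → Submodule k A)
    (hdirect : DirectSum.IsInternal 𝒜)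
    (hone : 𝒜 0 = Submodule.span k {(1 : A)})
    (hmul : ∀ (m m' : ℕ), ∀ a ∈ 𝒜 m, ∀ b ∈ 𝒜 m', a * b ∈ 𝒜 (m + m'))
    (n : ℕ) (hn : 1 ≤ n) (t : Fin n → Fin n → A)
    (ht1 : ∀ i j, t i j ∈ 𝒜 1)
    (hcomul : ∀ i j, Coalgebra.comul (R := k) (t i j) = ∑ m, t i m ⊗ₜ[k] t m j)
    (hcounit : ∀ i j, Coalgebra.counit (R := k) (t i j) = if i = j then (1 : k) else 0) :
    ¬ ∃ S : A →ₗ[k] A,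
      LinearMap.mul' k A ∘ₗ S.lTensor A ∘ₗ Coalgebra.comul (R := k) =
        Algebra.linearMap k A ∘ₗ Coalgebra.counit (R := k) := by
  rintro ⟨S, hS⟩
  set i : Fin n := ⟨0, hn⟩
  -- A is nontrivial
  have h10 : (1 : A) ≠ 0 := by
    intro h
    have hsub : Subsingleton A := subsingleton_of_zero_eq_one h.symm
    have ht0 : t i i = 0 := Subsingleton.elim _ _
    have := hcounit i i
    rw [ht0, map_zero, if_pos rfl] at this
    exact one_ne_zero this.symm
  -- the antipode identity at t i i
  have key : ∑ m, t i m * S (t m i) = 1 := by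
    have := LinearMap.congr_fun hS (t i i)
    simp only [LinearMap.comp_apply, hcomul, map_sum, LinearMap.lTensor_tmul,
      LinearMap.mul'_apply, hcounit, if_pos rfl, Algebra.linearMap_apply, map_one,
      if_true] at this
    simpa using this
  -- the LHS lies in degrees ≥ 1
  set Q : Submodule k A := ⨆ d : ℕ, 𝒜 (d + 1) with hQ
  have hmemQ : ∀ m : Fin n, t i m * S (t m i) ∈ Q := by
    intro m
    have hx : S (t m i) ∈ ⨆ d : ℕ, 𝒜 d := by
      rw [hdirect.submodule_iSup_eq_top]; trivial
    refine Submodule.iSup_induction (motive := fun x => t i m * x ∈ Q) _ hx ?_ ?_ ?_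
    · intro d x hxd
      have : t i m * x ∈ 𝒜 (1 + d) := hmul 1 d _ (ht1 i m) _ hxd
      have hle : 𝒜 (d + 1) ≤ Q := le_iSup (fun d => 𝒜 (d + 1)) d
      rw [Nat.add_comm] at this
      exact hle this
    · simp
    · intro x y hx hy
      rw [mul_add]; exact Q.add_mem hx hy
  have h1Q : (1 : A) ∈ Q := key ▸ Submodule.sum_mem Q (fun m _ => hmemQ m)
  -- but 1 ∈ 𝒜 0, and the grading is independent
  have h1A0 : (1 : A) ∈ 𝒜 0 := by
    rw [hone]; exact Submodule.mem_span_singleton_self 1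
  have hindep := hdirect.submodule_iSupIndep
  have hQle : Q ≤ ⨆ (j : ℕ) (_ : j ≠ 0), 𝒜 j :=
    iSup_le fun d => le_iSup₂ (f := fun (j : ℕ) (_ : j ≠ 0) => 𝒜 j) (d + 1) (Nat.succ_ne_zero d)
  have : (1 : A) ∈ (⊥ : Submodule k A) :=
    (hindep 0).le_bot ⟨h1A0, hQle h1Q⟩
  exact h10 (Submodule.mem_bot k |>.1 this)
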